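/- arXiv:1801.01368 — 2 statements merged into one kernel-verified Lean document; each statement's English description precedes it below -/
import Mathlib

section
/- Let n ≥ 4, let C be a totally traceless generalized curvature tensor on Minkowski space ℝ^n, let u be a unit timelike vector such that C is Weyl compatible with u, and let Γ be the associated tensor built from C, its electric part E, u and η. Then Γ is itself a generalized curvature tensor: Γ(x,y,z,w) = −Γ(y,x,z,w) = −Γ(x,y,w,z), Γ(x,y,z,w) = Γ(z,w,x,y), and Γ(x,y,z,w) + Γ(y,z,x,w) + Γ(z,x,y,w) = 0 for all x,y,z,w. -/
open Finset

noncomputable section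

/-- A 4-argument real tensor on `ℝ^n`. -/
abbrev Tensor4 (n : ℕ) :=
  (Fin n → ℝ) → (Fin n → ℝ) → (Fin n → ℝ) → (Fin n → ℝ) → ℝ

/-- Components of the Minkowski metric `diag(-1,1,…,1)` of signature `(-,+,…,+)`.
Since this matrix is its own inverse, it also gives the components `η^{ab}`
of the inverse metric. -/
def ηm {n : ℕ} (a b : Fin n) : ℝ :=
  if a = b then (if (a : ℕ) = 0 then -1 else 1) else 0

/-- The Minkowski bilinear form `η` of signature `(-,+,…,+)` on `ℝ^n`. -/
def ηf {n : ℕ} (x y : Fin n → ℝ) : ℝ :=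
  ∑ i : Fin n, (if (i : ℕ) = 0 then (-1 : ℝ) else 1) * x i * y i

/-- The standard basis `(e_a)` of `ℝ^n`. -/
def stdb {n : ℕ} (a : Fin n) : Fin n → ℝ := fun i => if i = a then 1 else 0

/-- Multilinearity of a 4-argument map. -/
def Multilinear4 {n : ℕ} (C : Tensor4 n) : Prop :=
  (∀ y z w, IsLinearMap ℝ fun x => C x y z w) ∧
  (∀ x z w, IsLinearMap ℝ fun y => C x y z w) ∧
  (∀ x y w, IsLinearMap ℝ fun z => C x y z w) ∧
  (∀ x y z, IsLinearMap ℝ fun w => C x y z w)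

/-- Bilinearity of a 2-argument map. -/
def Bilinear2 {n : ℕ} (S : (Fin n → ℝ) → (Fin n → ℝ) → ℝ) : Prop :=
  (∀ y, IsLinearMap ℝ fun x => S x y) ∧ (∀ x, IsLinearMap ℝ fun y => S x y)

/-- A generalized curvature tensor: a multilinear map with the algebraic
symmetries of the Riemann tensor (antisymmetry in the first and the last pair,
pair-exchange symmetry, and the first Bianchi identity). -/
def IsGenCurv {n : ℕ} (C : Tensor4 n) : Prop :=
  Multilinear4 C ∧
  (∀ x y z w, C x y z w = - C y x z w) ∧
  (∀ x y z w, C x y z w = - C x y w z) ∧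
  (∀ x y z w, C x y z w = C z w x y) ∧
  (∀ x y z w, C x y z w + C y z x w + C z x y w = 0)

/-- Total tracelessness: `Σ_{a,b} η^{ab} C(e_a, x, e_b, y) = 0`. -/
def TotallyTraceless {n : ℕ} (C : Tensor4 n) : Prop :=
  ∀ x y, (∑ a, ∑ b, ηm a b * C (stdb a) x (stdb b) y) = 0

/-- Weyl compatibility of `C` with the vector `u`. -/
def WeylCompatible {n : ℕ} (C : Tensor4 n) (u : Fin n → ℝ) : Prop :=
  ∀ x y z w,
    ηf u x * C y z w u + ηf u y * C z x w u + ηf u z * C x y w u = 0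

/-- The electric part of `C` relative to `u`: `E(x,y) = C(u,x,y,u)`. -/
def electric {n : ℕ} (C : Tensor4 n) (u : Fin n → ℝ)
    (x y : Fin n → ℝ) : ℝ :=
  C u x y u

/-- Full η-self-contraction `T² = Σ T_{abcd} T^{abcd}` of a 4-tensor. -/
def sq4 {n : ℕ} (T : Tensor4 n) : ℝ :=
  ∑ a, ∑ a', ∑ b, ∑ b', ∑ c, ∑ c', ∑ d, ∑ d',
    ηm a a' * ηm b b' * ηm c c' * ηm d d' *
      T (stdb a) (stdb b) (stdb c) (stdb d) *
      T (stdb a') (stdb b') (stdb c') (stdb d')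

/-- Full η-self-contraction `S² = Σ S_{ab} S^{ab}` of a 2-tensor. -/
def sq2 {n : ℕ} (S : (Fin n → ℝ) → (Fin n → ℝ) → ℝ) : ℝ :=
  ∑ a, ∑ a', ∑ b, ∑ b',
    ηm a a' * ηm b b' * S (stdb a) (stdb b) * S (stdb a') (stdb b')

/-- The tensor `Γ` associated with `C`, its electric part `E`, `u` and `η`. -/
def Γt {n : ℕ} (C : Tensor4 n) (u : Fin n → ℝ) : Tensor4 n :=
  fun x y z w =>
    C x y z w
      - ((n : ℝ) - 2) / ((n : ℝ) - 3) *
          (ηf u x * ηf u w * electric C u y z - ηf u y * ηf u w * electric C u x z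
            - ηf u x * ηf u z * electric C u y w + ηf u y * ηf u z * electric C u x w)
      - 1 / ((n : ℝ) - 3) *
          (ηf x w * electric C u y z - ηf y w * electric C u x z
            - ηf x z * electric C u y w + ηf y z * electric C u x w)

lemma etaf_symm {n : ℕ} (x y : Fin n → ℝ) : ηf x y = ηf y x := by
  unfold ηf; exact Finset.sum_congr rfl fun i _ => by ring

lemma etaf_add_right {n : ℕ} (x y y' : Fin n → ℝ) :
    ηf x (y + y') = ηf x y + ηf x y' := by
  unfold ηf
  rw [← Finset.sum_add_distrib]
  exact Finset.sum_congr rfl fun i _ => by simp only [Pi.add_apply]; ring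

lemma etaf_smul_right {n : ℕ} (r : ℝ) (x y : Fin n → ℝ) :
    ηf x (r • y) = r * ηf x y := by
  unfold ηf
  rw [Finset.mul_sum]
  exact Finset.sum_congr rfl fun i _ => by simp only [Pi.smul_apply, smul_eq_mul]; ring

lemma etaf_add_left {n : ℕ} (x x' y : Fin n → ℝ) :
    ηf (x + x') y = ηf x y + ηf x' y := by
  rw [etaf_symm, etaf_add_right, etaf_symm y x, etaf_symm y x']

lemma etaf_smul_left {n : ℕ} (r : ℝ) (x y : Fin n → ℝ) :
    ηf (r • x) y = r * ηf x y := by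
  rw [etaf_symm, etaf_smul_right, etaf_symm y x]

/-- for `n ≥ 4`, a totally traceless generalized curvature tensor
`C` on Minkowski `ℝ^n` Weyl compatible with a unit timelike `u`, the associated
tensor `Γ` is itself a generalized curvature tensor. -/
theorem stmt_8 {n : ℕ} (hn : 4 ≤ n) (C : Tensor4 n)
    (hC : IsGenCurv C) (htr : TotallyTraceless C)
    (u : Fin n → ℝ) (hu : ηf u u = -1) (hW : WeylCompatible C u) :
    IsGenCurv (Γt C u) := by
  obtain ⟨⟨h1, h2, h3, h4⟩, ha1, ha2, hpe, hb⟩ := hC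
  -- symmetry of the electric part
  have hE : ∀ a b, electric C u a b = electric C u b a := by
    intro a b
    unfold electric
    rw [hpe u a b u, ha1 b u u a, ha2 u b u a]
    ring
  refine ⟨⟨?_, ?_, ?_, ?_⟩, ?_, ?_, ?_, ?_⟩
  · intro y z w
    refine ⟨fun x x' => ?_, fun r x => ?_⟩
    · simp only [Γt, electric]
      rw [(h1 y z w).map_add, (h2 u z u).map_add, (h2 u w u).map_add,
        etaf_add_right u x x', etaf_add_left x x' w, etaf_add_left x x' z]
      ring
    · simp only [Γt, electric, smul_eq_mul]
      rw [(h1 y z w).map_smul, (h2 u z u).map_smul, (h2 u w u).map_smul,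
        etaf_smul_right r u x, etaf_smul_left r x w, etaf_smul_left r x z,
        smul_eq_mul, smul_eq_mul, smul_eq_mul]
      ring
  · intro x z w
    refine ⟨fun y y' => ?_, fun r y => ?_⟩
    · simp only [Γt, electric]
      rw [(h2 x z w).map_add, (h2 u z u).map_add, (h2 u w u).map_add,
        etaf_add_right u y y', etaf_add_left y y' w, etaf_add_left y y' z]
      ring
    · simp only [Γt, electric, smul_eq_mul]
      rw [(h2 x z w).map_smul, (h2 u z u).map_smul, (h2 u w u).map_smul,
        etaf_smul_right r u y, etaf_smul_left r y w, etaf_smul_left r y z,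
        smul_eq_mul, smul_eq_mul, smul_eq_mul]
      ring
  · intro x y w
    refine ⟨fun z z' => ?_, fun r z => ?_⟩
    · simp only [Γt, electric]
      rw [(h3 x y w).map_add, (h3 u y u).map_add, (h3 u x u).map_add,
        etaf_add_right u z z', etaf_add_right x z z', etaf_add_right y z z']
      ring
    · simp only [Γt, electric, smul_eq_mul]
      rw [(h3 x y w).map_smul, (h3 u y u).map_smul, (h3 u x u).map_smul,
        etaf_smul_right r u z, etaf_smul_right r x z, etaf_smul_right r y z,
        smul_eq_mul, smul_eq_mul, smul_eq_mul]
      ring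
  · intro x y z
    refine ⟨fun w w' => ?_, fun r w => ?_⟩
    · simp only [Γt, electric]
      rw [(h4 x y z).map_add, (h3 u y u).map_add, (h3 u x u).map_add,
        etaf_add_right u w w', etaf_add_right x w w', etaf_add_right y w w']
      ring
    · simp only [Γt, electric, smul_eq_mul]
      rw [(h4 x y z).map_smul, (h3 u y u).map_smul, (h3 u x u).map_smul,
        etaf_smul_right r u w, etaf_smul_right r x w, etaf_smul_right r y w,
        smul_eq_mul, smul_eq_mul, smul_eq_mul]
      ring
  · intro x y z w
    simp only [Γt]
    rw [ha1 x y z w]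
    ring
  · intro x y z w
    simp only [Γt]
    rw [ha2 x y z w]
    ring
  · intro x y z w
    simp only [Γt]
    rw [hpe x y z w, hE w x, hE z x, hE w y, hE z y,
      etaf_symm z y, etaf_symm w x, etaf_symm w y, etaf_symm z x]
    ring
  · intro x y z w
    simp only [Γt]
    rw [hE y x, hE z x, hE z y, etaf_symm y x, etaf_symm z x, etaf_symm z y]
    linear_combination hb x y z w
end
end

section
/- Let n ≥ 4, let C be a totally traceless generalized curvature tensor on Minkowski space ℝ^n, let u be a unit timelike vector such that C is Weyl compatible with u, and let Γ be the associated tensor built from C, its electric part E, u and η. Then Γ is totally traceless: Σ_{a,b} η^{ab} Γ(e_a, x, e_b, y) = 0 for all x, y. -/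
open Finset

noncomputable section

/-- The sign `ε_a = η_{aa}`. -/
def εs {n : ℕ} (a : Fin n) : ℝ := if (a : ℕ) = 0 then -1 else 1

lemma eps_sq {n : ℕ} (a : Fin n) : εs a * εs a = 1 := by
  unfold εs; split <;> norm_num

/-- Collapse a diagonal double contraction. -/
lemma diag_collapse {n : ℕ} (f : Fin n → Fin n → ℝ) :
    ∑ a, ∑ b, ηm a b * f a b = ∑ a, εs a * f a a := by
  refine Finset.sum_congr rfl fun a _ => ?_
  rw [Finset.sum_eq_single a]
  · simp [ηm, εs]
  · intro b _ hb
    simp [ηm, Ne.symm hb]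
  · simp

lemma etaf_stdb {n : ℕ} (a : Fin n) (y : Fin n → ℝ) :
    ηf (stdb a) y = εs a * y a := by
  unfold ηf stdb εs
  rw [Finset.sum_eq_single a]
  · simp
  · intro b _ hb; simp [hb]
  · simp

lemma etaf_stdb' {n : ℕ} (a : Fin n) (y : Fin n → ℝ) :
    ηf y (stdb a) = εs a * y a := by
  unfold ηf stdb εs
  rw [Finset.sum_eq_single a]
  · simp [mul_comm]
  · intro b _ hb; simp [hb]
  · simp

lemma lin_expand {n : ℕ} {f : (Fin n → ℝ) → ℝ} (hf : IsLinearMap ℝ f)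
    (x : Fin n → ℝ) : ∑ a, x a * f (stdb a) = f x := by
  have hx : x = ∑ a, x a • stdb a := by
    ext i
    simp [stdb, Finset.sum_apply, Finset.sum_ite_eq]
  calc ∑ a, x a * f (stdb a) = ∑ a, f (x a • stdb a) := by
        refine Finset.sum_congr rfl fun a _ => ?_
        rw [hf.map_smul, smul_eq_mul]
    _ = f (∑ a, x a • stdb a) :=
        (map_sum (IsLinearMap.mk' f hf) _ _).symm
    _ = f x := by rw [← hx]

/-- for `n ≥ 4`, a totally traceless generalized curvature tensor
`C` on Minkowski `ℝ^n` Weyl compatible with a unit timelike `u`, the associated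
tensor `Γ` is totally traceless. -/
theorem stmt_9 {n : ℕ} (hn : 4 ≤ n) (C : Tensor4 n)
    (hC : IsGenCurv C) (htr : TotallyTraceless C)
    (u : Fin n → ℝ) (hu : ηf u u = -1) (hW : WeylCompatible C u) :
    TotallyTraceless (Γt C u) := by
  obtain ⟨hm, ha1, ha2, hpair, hbi⟩ := hC
  intro x y
  rw [diag_collapse]
  -- basic facts
  have hS0 : ∑ a, εs a * C (stdb a) x (stdb a) y = 0 := by
    rw [← diag_collapse fun a b => C (stdb a) x (stdb b) y]; exact htr x y
  have hP2 : ∑ a, εs a * C u (stdb a) (stdb a) u = 0 := by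
    have h0 : ∑ a, εs a * C (stdb a) u (stdb a) u = 0 := by
      rw [← diag_collapse fun a b => C (stdb a) u (stdb b) u]; exact htr u u
    calc ∑ a, εs a * C u (stdb a) (stdb a) u
        = ∑ a, -(εs a * C (stdb a) u (stdb a) u) := by
          refine Finset.sum_congr rfl fun a _ => ?_
          rw [ha1 u (stdb a) (stdb a) u]; ring
      _ = 0 := by rw [Finset.sum_neg_distrib, h0, neg_zero]
  have hCxu : C u x u u = 0 := by
    have := ha2 u x u u; linarith
  have hCuy : C u u y u = 0 := by
    have := ha1 u u y u; linarith
  have hP1 : ∑ a, u a * C u x (stdb a) u = 0 := by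
    rw [lin_expand (hm.2.2.1 u x u) u, hCxu]
  have hQ1 : ∑ a, y a * C u x (stdb a) u = C u x y u :=
    lin_expand (hm.2.2.1 u x u) y
  have hP4 : ∑ a, u a * C u (stdb a) y u = 0 := by
    rw [lin_expand (hm.2.1 u y u) u, hCuy]
  have hQ4 : ∑ a, x a * C u (stdb a) y u = C u x y u :=
    lin_expand (hm.2.1 u y u) x
  have hP3 : ∑ a, εs a * (u a * u a) = -1 := by
    rw [← hu]; unfold ηf εs; exact Finset.sum_congr rfl fun a _ => by ring
  have hcard : ∑ _a : Fin n, (1 : ℝ) = (n : ℝ) := by simp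
  -- rewrite each summand
  have key : ∀ a : Fin n,
      εs a * Γt C u (stdb a) x (stdb a) y
      = εs a * C (stdb a) x (stdb a) y
        - ((n : ℝ) - 2) / ((n : ℝ) - 3) *
          (ηf u y * (u a * C u x (stdb a) u)
            - ηf u x * ηf u y * (εs a * C u (stdb a) (stdb a) u)
            - C u x y u * (εs a * (u a * u a))
            + ηf u x * (u a * C u (stdb a) y u))
        - 1 / ((n : ℝ) - 3) *
          ((y a * C u x (stdb a) u)
            - ηf x y * (εs a * C u (stdb a) (stdb a) u)
            - C u x y u * (1 : ℝ)
            + (x a * C u (stdb a) y u)) := by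
    intro a
    have he := eps_sq a
    have hstdba : stdb a a = (1 : ℝ) := by simp [stdb]
    simp only [Γt, electric, etaf_stdb, etaf_stdb', hstdba]
    rcases (show εs a = 1 ∨ εs a = -1 by unfold εs; split <;> simp) with h | h <;>
      rw [h] <;> ring
  rw [Finset.sum_congr rfl fun a _ => key a]
  rw [Finset.sum_sub_distrib, Finset.sum_sub_distrib, ← Finset.mul_sum,
    ← Finset.mul_sum]
  simp only [Finset.sum_add_distrib, Finset.sum_sub_distrib, ← Finset.mul_sum,
    mul_one, Finset.sum_const, Finset.card_univ, Fintype.card_fin, nsmul_eq_mul]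
  rw [hS0, hP1, hP2, hP3, hP4, hQ1, hQ4]
  have hn3 : ((n : ℝ) - 3) ≠ 0 := by
    have : (4 : ℝ) ≤ (n : ℝ) := by exact_mod_cast hn
    linarith
  field_simp
  ring
end
end
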